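/- Every rational number p/q with p, q coprime integers and p > q > 0 admits a unique negative continued fraction expansion with all entries at least 2; that is, there exist a unique n ≥ 1 and unique integers a_1, …, a_n with each a_i ≥ 2 such that K(a_1,…,a_n) = p and K(a_2,…,a_n) = q (equivalently, p/q = [a_1,…,a_n]^-). -/

import Mathlib

/-- The negative continuant `K(a₁,…,aₙ)`, defined by `K() = 1`, `K(a) = a`, and
`K(a₁,a₂,…,aₙ) = a₁·K(a₂,…,aₙ) − K(a₃,…,aₙ)`.  The negative continued fraction
`[a₁,…,aₙ]⁻` equals `K(a₁,…,aₙ)/K(a₂,…,aₙ)`. -/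
def negCont : List ℤ → ℤ
  | [] => 1
  | [a] => a
  | a :: b :: l => a * negCont (b :: l) - negCont l

lemma negCont_bounds : ∀ L : List ℤ, (∀ a ∈ L, 2 ≤ a) →
    1 ≤ negCont L ∧ (L ≠ [] → negCont L.tail < negCont L)
  | [], _ => by simp [negCont]
  | [a], h => by
      have := h a (by simp)
      simp [negCont]; omega
  | a :: b :: l, h => by
      have ha : 2 ≤ a := h a (by simp)
      obtain ⟨h1, h2⟩ := negCont_bounds (b :: l) (fun x hx => h x (by simp [hx]))
      obtain ⟨h3, _⟩ := negCont_bounds l (fun x hx => h x (by simp [hx]))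
      have h2' : negCont l < negCont (b :: l) := h2 (by simp)
      have : negCont (a :: b :: l) = a * negCont (b :: l) - negCont l := rfl
      constructor
      · nlinarith
      · intro _
        show negCont (b :: l) < negCont (a :: b :: l)
        nlinarith

lemma negCont_unique : ∀ l m : List ℤ, (∀ a ∈ l, 2 ≤ a) → (∀ a ∈ m, 2 ≤ a) →
    negCont l = negCont m → negCont l.tail = negCont m.tail → l = m
  | [], [], _, _, _, _ => rfl
  | [], b :: m, hl, hm, h, _ => by
      obtain ⟨h1, h2⟩ := negCont_bounds (b :: m) hm
      have h2' := h2 (by simp)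
      simp only [List.tail_cons] at h2'
      obtain ⟨h3, _⟩ := negCont_bounds m (fun x hx => hm x (by simp [hx]))
      simp only [negCont] at h
      omega
  | a :: l, [], hl, hm, h, _ => by
      obtain ⟨h1, h2⟩ := negCont_bounds (a :: l) hl
      have h2' := h2 (by simp)
      simp only [List.tail_cons] at h2'
      obtain ⟨h3, _⟩ := negCont_bounds l (fun x hx => hl x (by simp [hx]))
      simp only [negCont] at h
      omega
  | [a], [b], hl, hm, h, ht => by
      simp only [negCont] at h
      rw [h]
  | [a], b :: c :: m, hl, hm, h, ht => by
      simp only [List.tail_cons, negCont] at ht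
      obtain ⟨h1, h2⟩ := negCont_bounds (c :: m) (fun x hx => hm x (by simp [hx]))
      have h2' := h2 (by simp)
      simp only [List.tail_cons] at h2'
      obtain ⟨h3, _⟩ := negCont_bounds m (fun x hx => hm x (by simp [hx]))
      omega
  | a :: c :: l, [b], hl, hm, h, ht => by
      simp only [List.tail_cons, negCont] at ht
      obtain ⟨h1, h2⟩ := negCont_bounds (c :: l) (fun x hx => hl x (by simp [hx]))
      have h2' := h2 (by simp)
      simp only [List.tail_cons] at h2'
      obtain ⟨h3, _⟩ := negCont_bounds l (fun x hx => hl x (by simp [hx]))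
      omega
  | a :: c :: l, b :: d :: m, hl, hm, h, ht => by
      simp only [List.tail_cons] at ht
      have hl' : ∀ x ∈ c :: l, 2 ≤ x := fun x hx => hl x (by simp [hx])
      have hm' : ∀ x ∈ d :: m, 2 ≤ x := fun x hx => hm x (by simp [hx])
      have ha : 2 ≤ a := hl a (by simp)
      have hb : 2 ≤ b := hm b (by simp)
      obtain ⟨hq1, hq2⟩ := negCont_bounds (c :: l) hl'
      obtain ⟨hr1, hr2⟩ := negCont_bounds (d :: m) hm'
      have hq2' := hq2 (by simp)
      have hr2' := hr2 (by simp)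
      simp only [List.tail_cons] at hq2' hr2'
      obtain ⟨hq3, _⟩ := negCont_bounds l (fun x hx => hl' x (by simp [hx]))
      obtain ⟨hr3, _⟩ := negCont_bounds m (fun x hx => hm' x (by simp [hx]))
      have e1 : negCont (a :: c :: l) = a * negCont (c :: l) - negCont l := rfl
      have e2 : negCont (b :: d :: m) = b * negCont (d :: m) - negCont m := rfl
      rw [e1, e2, ht] at h
      have hab : a = b := by
        rcases lt_trichotomy a b with hlt | heq | hgt
        · nlinarith
        · exact heq
        · nlinarith
      subst hab
      have htail : negCont l = negCont m := by
        have := h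
        nlinarith [ht]
      have := negCont_unique (c :: l) (d :: m) hl' hm' ht
        (by simpa only [List.tail_cons] using htail)
      rw [this]

lemma negCont_exists : ∀ n : ℕ, ∀ p q : ℤ, q.natAbs ≤ n → IsCoprime p q → q < p → 0 < q →
    ∃ L : List ℤ, L ≠ [] ∧ (∀ a ∈ L, 2 ≤ a) ∧ negCont L = p ∧ negCont L.tail = q := by
  intro n
  induction n with
  | zero => intro p q hn _ _ hq; omega
  | succ n ih =>
    intro p q hn hco hqp hq
    by_cases hq1 : q = 1
    · refine ⟨[p], by simp, ?_, by simp [negCont], by simp [negCont, hq1]⟩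
      intro a ha
      simp at ha
      omega
    · -- q ≥ 2
      have hq2 : 2 ≤ q := by omega
      set a : ℤ := (p + q - 1) / q with hadef
      have hr0 : 0 ≤ a * q - p := by
        have := Int.ediv_mul_le (p + q - 1) (show q ≠ 0 by omega)
        have h2 := Int.lt_ediv_add_one_mul_self (p + q - 1) hq
        nlinarith [Int.mul_ediv_add_emod (p + q - 1) q, Int.emod_nonneg (p + q - 1) (show q ≠ 0 by omega), Int.emod_lt_of_pos (p + q - 1) hq]
      have hrq : a * q - p < q := by
        have h2 := Int.lt_ediv_add_one_mul_self (p + q - 1) hq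
        nlinarith [Int.mul_ediv_add_emod (p + q - 1) q, Int.emod_nonneg (p + q - 1) (show q ≠ 0 by omega), Int.emod_lt_of_pos (p + q - 1) hq]
      obtain ⟨r, hrdef⟩ : ∃ r : ℤ, r = a * q - p := ⟨_, rfl⟩
      rw [← hrdef] at hr0 hrq
      have hrpos : 0 < r := by
        rcases hr0.lt_or_eq with h | h
        · exact h
        · exfalso
          have hdvd : q ∣ p := ⟨a, by rw [mul_comm]; linarith [hrdef]⟩
          have : IsUnit q := hco.symm.isUnit_of_dvd' dvd_rfl hdvd
          rw [Int.isUnit_iff] at this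
          omega
      have hco' : IsCoprime q r := by
        have : IsCoprime q (-p) := (hco.symm).neg_right
        have h2 := this.add_mul_left_right a
        rw [hrdef]
        rw [show a * q - p = -p + q * a by ring]
        exact h2
      obtain ⟨L', hL'ne, hL'2, hL'K, hL'T⟩ := ih q r (by omega) hco' (by omega) hrpos
      have ha2 : 2 ≤ a := by nlinarith [hrdef]
      refine ⟨a :: L', by simp, ?_, ?_, by simpa using hL'K⟩
      · intro x hx
        rcases List.mem_cons.mp hx with h | h
        · omega
        · exact hL'2 x h
      · obtain ⟨b, l, rfl⟩ := List.exists_cons_of_ne_nil hL'ne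
        show a * negCont (b :: l) - negCont l = p
        simp only [List.tail_cons] at hL'T
        rw [hL'K, hL'T]
        omega

/-- Every rational `p/q` with `p, q` coprime and `p > q > 0` has a unique negative
continued fraction expansion with all entries at least `2`: there is a unique
nonempty string `L = (a₁,…,aₙ)` of integers `aᵢ ≥ 2` with `K(a₁,…,aₙ) = p` and
`K(a₂,…,aₙ) = q`, i.e. `p/q = [a₁,…,aₙ]⁻`. -/
theorem stmt0 (p q : ℤ) (hco : IsCoprime p q) (hqp : q < p) (hq : 0 < q) :
    ∃! L : List ℤ, L ≠ [] ∧ (∀ a ∈ L, 2 ≤ a) ∧ negCont L = p ∧ negCont L.tail = q := by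
  obtain ⟨L, h1, h2, h3, h4⟩ := negCont_exists q.natAbs p q le_rfl hco hqp hq
  refine ⟨L, ⟨h1, h2, h3, h4⟩, ?_⟩
  rintro M ⟨m1, m2, m3, m4⟩
  exact negCont_unique M L m2 h2 (by rw [m3, h3]) (by rw [m4, h4])
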